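/- Let M be a finitely generated torsion-free abelian group, f a positive integer, and F an automorphism of M with F^f = id. Set N := ∑_{n=0}^{f−1} F^n : M → M, W' := ker N, and r := rank_ℤ M^F. Then the subgroups (1−F)(W') ⊆ W', (1−F)(M) ⊆ W', and N(M) ⊆ M^F all have finite index, and [W' : (1−F)(W')] · [M^F : N(M)] = f^r · [W' : (1−F)(M)]. -/

import Mathlib

/-- The index `[Q : P]` of a submodule `P` inside a submodule `Q` (the cardinality of `Q/(P ∩ Q)`;
it is the honest index when `P ≤ Q`). -/
noncomputable def relIndex {M : Type} [AddCommGroup M] (P Q : Submodule ℤ M) : ℕ :=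
  Nat.card (Q ⧸ P.comap Q.subtype)

/-- `P` is a finite-index subgroup of `Q`. -/
def FiniteIndexIn {M : Type} [AddCommGroup M] (P Q : Submodule ℤ M) : Prop :=
  P ≤ Q ∧ Finite (Q ⧸ P.comap Q.subtype)

open Module

lemma card_quot_int' (f : ℕ) (hf : 0 < f) :
    Nat.card (ℤ ⧸ LinearMap.range ((f : ℤ) • (LinearMap.id : ℤ →ₗ[ℤ] ℤ))) = f := by
  have h : LinearMap.range ((f : ℤ) • (LinearMap.id : ℤ →ₗ[ℤ] ℤ)) = Ideal.span {(f : ℤ)} := by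
    ext x
    simp [Ideal.mem_span_singleton, LinearMap.mem_range, dvd_iff_exists_eq_mul_left,
      eq_comm, mul_comm]
  rw [h]
  haveI : NeZero f := ⟨hf.ne'⟩
  rw [Nat.card_congr (Int.quotientSpanNatEquivZMod f).toEquiv, Nat.card_zmod]

lemma card_quot_smul' {M : Type} [AddCommGroup M] [Module.Finite ℤ M] [NoZeroSMulDivisors ℤ M]
    (K : Submodule ℤ M) (f : ℕ) (hf : 0 < f) :
    Nat.card (↥K ⧸ LinearMap.range ((f : ℤ) • (LinearMap.id : K →ₗ[ℤ] K))) = f ^ finrank ℤ K := by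
  classical
  haveI : IsNoetherian ℤ M := isNoetherian_of_isNoetherianRing_of_finite ℤ M
  haveI : Module.Finite ℤ K := Module.Finite.iff_fg.mpr (IsNoetherian.noetherian K)
  haveI : Module.Free ℤ ↥K := Module.free_of_finite_type_torsion_free'
  set ι := Free.ChooseBasisIndex ℤ ↥K with hι
  let b : Basis ι ℤ ↥K := Free.chooseBasis ℤ ↥K
  let e : ↥K ≃ₗ[ℤ] (ι → ℤ) := b.equivFun
  have hmap : (LinearMap.range ((f : ℤ) • (LinearMap.id : K →ₗ[ℤ] K))).map (e : K →ₗ[ℤ] (ι → ℤ)) =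
      LinearMap.range ((f : ℤ) • (LinearMap.id : (ι → ℤ) →ₗ[ℤ] (ι → ℤ))) := by
    ext x
    simp only [Submodule.mem_map, LinearMap.mem_range, LinearMap.smul_apply, LinearMap.id_apply]
    constructor
    · rintro ⟨-, ⟨y, rfl⟩, rfl⟩
      exact ⟨e y, by rw [map_zsmul, LinearEquiv.coe_coe]⟩
    · rintro ⟨y, rfl⟩
      exact ⟨(f : ℤ) • e.symm y, ⟨e.symm y, rfl⟩, by rw [map_zsmul, LinearEquiv.coe_coe, e.apply_symm_apply]⟩
  rw [Nat.card_congr (Submodule.Quotient.equiv _ _ e hmap).toEquiv]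
  have hpi : LinearMap.range ((f : ℤ) • (LinearMap.id : (ι → ℤ) →ₗ[ℤ] (ι → ℤ))) =
      Submodule.pi Set.univ (fun _ : ι =>
        LinearMap.range ((f : ℤ) • (LinearMap.id : ℤ →ₗ[ℤ] ℤ))) := by
    ext g
    simp only [LinearMap.mem_range, Submodule.mem_pi, Set.mem_univ, true_implies,
      LinearMap.smul_apply, LinearMap.id_apply]
    constructor
    · rintro ⟨h, rfl⟩ i; exact ⟨h i, rfl⟩
    · intro h
      exact ⟨fun i => (h i).choose, funext fun i => (h i).choose_spec⟩
  rw [hpi, Nat.card_congr (Submodule.quotientPi _).toEquiv, Nat.card_pi,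
    Finset.prod_congr rfl (fun i _ => card_quot_int' f hf), Finset.prod_const,
    Finset.card_univ, Module.finrank_eq_card_chooseBasisIndex]

lemma fin_aux' {M : Type} [AddCommGroup M] [Module.Finite ℤ M]
    (f : ℕ) (hf : 0 < f) (P Q : Submodule ℤ M) (h : ∀ x ∈ Q, (f : ℤ) • x ∈ P) :
    Finite (Q ⧸ P.comap Q.subtype) := by
  haveI : IsNoetherian ℤ M := isNoetherian_of_isNoetherianRing_of_finite ℤ M
  haveI : Module.Finite ℤ Q := Module.Finite.iff_fg.mpr (IsNoetherian.noetherian Q)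
  haveI : Module.Finite ℤ (Q ⧸ P.comap Q.subtype) :=
    Module.Finite.of_surjective (P.comap Q.subtype).mkQ (Submodule.Quotient.mk_surjective _)
  apply Module.finite_of_fg_torsion
  intro x
  obtain ⟨y, rfl⟩ := Submodule.Quotient.mk_surjective _ x
  refine ⟨⟨(f : ℤ), mem_nonZeroDivisors_of_ne_zero (by exact_mod_cast hf.ne')⟩, ?_⟩
  rw [Submonoid.mk_smul, ← Submodule.Quotient.mk_smul, Submodule.Quotient.mk_eq_zero]
  show ((f : ℤ) • y : Q).1 ∈ P
  rw [Submodule.coe_smul]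
  exact h y.1 y.2

/-- **The key index identity for the Herbrand-quotient computation.**
`M` is a finitely generated torsion-free abelian group, `F` an automorphism with `F ^ f = 1`
(`f > 0`).  With `N = ∑_{n=0}^{f-1} Fⁿ`, `W' = ker N`, `M^F = ker (F - 1)` and
`r = rank_ℤ M^F`:  the subgroups `(1-F)(W') ⊆ W'`, `(1-F)(M) ⊆ W'` and `N(M) ⊆ M^F` all have
finite index, and `[W' : (1-F)W'] * [M^F : N(M)] = f ^ r * [W' : (1-F)M]`. -/
theorem stmt_2 (M : Type) [AddCommGroup M] [Module.Finite ℤ M] [NoZeroSMulDivisors ℤ M]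
    (f : ℕ) (hf : 0 < f) (F : M ≃ₗ[ℤ] M) (hF : F ^ f = 1) :
    FiniteIndexIn
        (Submodule.map (LinearMap.id - (F : M →ₗ[ℤ] M))
          (LinearMap.ker (∑ n ∈ Finset.range f, (F : M →ₗ[ℤ] M) ^ n)))
        (LinearMap.ker (∑ n ∈ Finset.range f, (F : M →ₗ[ℤ] M) ^ n)) ∧
    FiniteIndexIn (LinearMap.range (LinearMap.id - (F : M →ₗ[ℤ] M)))
        (LinearMap.ker (∑ n ∈ Finset.range f, (F : M →ₗ[ℤ] M) ^ n)) ∧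
    FiniteIndexIn (LinearMap.range (∑ n ∈ Finset.range f, (F : M →ₗ[ℤ] M) ^ n))
        (LinearMap.ker ((F : M →ₗ[ℤ] M) - LinearMap.id)) ∧
    relIndex
          (Submodule.map (LinearMap.id - (F : M →ₗ[ℤ] M))
            (LinearMap.ker (∑ n ∈ Finset.range f, (F : M →ₗ[ℤ] M) ^ n)))
          (LinearMap.ker (∑ n ∈ Finset.range f, (F : M →ₗ[ℤ] M) ^ n)) *
        relIndex (LinearMap.range (∑ n ∈ Finset.range f, (F : M →ₗ[ℤ] M) ^ n))
          (LinearMap.ker ((F : M →ₗ[ℤ] M) - LinearMap.id)) =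
      f ^ Module.finrank ℤ (LinearMap.ker ((F : M →ₗ[ℤ] M) - LinearMap.id)) *
        relIndex (LinearMap.range (LinearMap.id - (F : M →ₗ[ℤ] M)))
          (LinearMap.ker (∑ n ∈ Finset.range f, (F : M →ₗ[ℤ] M) ^ n)) := by
  simp only [← Module.End.one_eq_id]
  set φ : Module.End ℤ M := (F : M →ₗ[ℤ] M) with hφ
  set Nφ : Module.End ℤ M := ∑ n ∈ Finset.range f, φ ^ n with hNφ
  -- basic ring facts
  have hφf : φ ^ f = 1 := by
    ext x
    have h1 : (F ^ f) x = x := by rw [hF]; rfl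
    rw [LinearEquiv.pow_apply] at h1
    simpa [Module.End.pow_apply, hφ] using h1
  have h1 : Nφ * (φ - 1) = 0 := by rw [hNφ, geom_sum_mul, hφf, sub_self]
  have h2 : (φ - 1) * Nφ = 0 := by rw [hNφ, mul_geom_sum, hφf, sub_self]
  set W' : Submodule ℤ M := LinearMap.ker Nφ with hW'
  set K : Submodule ℤ M := LinearMap.ker (φ - 1) with hK
  set A : Submodule ℤ M := Submodule.map (1 - φ) W' with hA
  set B : Submodule ℤ M := LinearMap.range (1 - φ) with hB
  set C : Submodule ℤ M := LinearMap.range Nφ with hC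
  set D : Submodule ℤ M := Submodule.map Nφ K with hD
  -- inclusions
  have hBW : B ≤ W' := by
    rintro x ⟨y, rfl⟩
    show Nφ ((1 - φ) y) = 0
    have : Nφ * (1 - φ) = 0 := by
      have : Nφ * (1 - φ) = -(Nφ * (φ - 1)) := by noncomm_ring
      rw [this, h1, neg_zero]
    calc Nφ ((1 - φ) y) = (Nφ * (1 - φ)) y := rfl
      _ = 0 := by rw [this]; rfl
  have hAB : A ≤ B := by
    rw [hA, hB, LinearMap.range_eq_map]
    exact Submodule.map_mono le_top
  have hAW : A ≤ W' := le_trans hAB hBW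
  have hCK : C ≤ K := by
    rintro x ⟨y, rfl⟩
    show (φ - 1) (Nφ y) = 0
    calc (φ - 1) (Nφ y) = ((φ - 1) * Nφ) y := rfl
      _ = 0 := by rw [h2]; rfl
  have hDC : D ≤ C := by
    rw [hD, hC, LinearMap.range_eq_map]
    exact Submodule.map_mono le_top
  -- N acts as f on K
  have hNK : ∀ x ∈ K, Nφ x = (f : ℤ) • x := by
    intro x hx
    have hφx : φ x = x := by
      have : (φ - 1) x = 0 := hx
      have := sub_eq_zero.mp (by simpa [LinearMap.sub_apply] using this)
      simpa using this
    have hpow : ∀ n : ℕ, (φ ^ n) x = x := by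
      intro n
      induction n with
      | zero => rfl
      | succ n ih => rw [pow_succ, Module.End.mul_apply, hφx, ih]
    rw [hNφ]
    rw [LinearMap.sum_apply]
    rw [Finset.sum_congr rfl fun n _ => hpow n, Finset.sum_const, Finset.card_range]
    simp
  have hDsmul : D = Submodule.map ((f : ℤ) • (1 : Module.End ℤ M)) K := by
    rw [hD]
    ext x
    simp only [Submodule.mem_map]
    constructor
    · rintro ⟨y, hy, rfl⟩
      exact ⟨y, hy, by rw [hNK y hy]; simp⟩
    · rintro ⟨y, hy, rfl⟩
      exact ⟨y, hy, by rw [hNK y hy]; simp⟩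
  -- f • W' ⊆ A
  set T : Module.End ℤ M := ∑ n ∈ Finset.range f, ∑ k ∈ Finset.range n, φ ^ k with hT
  have hTcomm : Commute Nφ T := by
    apply Commute.sum_left
    intro n _
    apply Commute.sum_right
    intro m _
    apply Commute.sum_right
    intro k _
    exact Commute.pow_pow (Commute.refl φ) n k
  have hTid : (1 - φ) * T = (f : ℤ) • (1 : Module.End ℤ M) - Nφ := by
    rw [hT, Finset.mul_sum]
    have step : ∀ n ∈ Finset.range f,
        (1 - φ) * ∑ k ∈ Finset.range n, φ ^ k = 1 - φ ^ n := by
      intro n _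
      have := mul_geom_sum φ n
      have h' : (1 - φ) * ∑ k ∈ Finset.range n, φ ^ k
          = -((φ - 1) * ∑ k ∈ Finset.range n, φ ^ k) := by noncomm_ring
      rw [h', this, neg_sub]
    rw [Finset.sum_congr rfl step, Finset.sum_sub_distrib, Finset.sum_const, Finset.card_range,
      hNφ]
    congr 1
    simp
  have hfW : ∀ x ∈ W', (f : ℤ) • x ∈ A := by
    intro x hx
    have hx0 : Nφ x = 0 := hx
    have hTx : T x ∈ W' := by
      show Nφ (T x) = 0
      calc Nφ (T x) = (Nφ * T) x := rfl
        _ = (T * Nφ) x := by rw [hTcomm.eq]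
        _ = T (Nφ x) := rfl
        _ = 0 := by rw [hx0, map_zero]
    have hval : (1 - φ) (T x) = (f : ℤ) • x := by
      calc (1 - φ) (T x) = ((1 - φ) * T) x := rfl
        _ = ((f : ℤ) • (1 : Module.End ℤ M) - Nφ) x := by rw [hTid]
        _ = (f : ℤ) • x - Nφ x := rfl
        _ = (f : ℤ) • x := by rw [hx0, sub_zero]
    exact ⟨T x, hTx, hval⟩
  -- comap identities
  have hcomapA : Submodule.comap (1 - φ : Module.End ℤ M) A = W' ⊔ K := by
    ext x
    rw [Submodule.mem_comap, Submodule.mem_sup]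
    constructor
    · rintro hx
      rw [hA, Submodule.mem_map] at hx
      obtain ⟨w, hw, heq⟩ := hx
      refine ⟨w, hw, x - w, ?_, by abel⟩
      show (φ - 1) (x - w) = 0
      have : (1 - φ) (x - w) = 0 := by
        rw [map_sub, heq, sub_self]
      have h' : -((φ - 1) (x - w)) = 0 := by
        calc -((φ - 1) (x - w)) = (-(φ - 1)) (x - w) := by rw [LinearMap.neg_apply]
          _ = (1 - φ) (x - w) := by rw [neg_sub]
          _ = 0 := this
      exact neg_eq_zero.mp h'
    · rintro ⟨w, hw, k, hk, rfl⟩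
      rw [hA, Submodule.mem_map]
      refine ⟨w, hw, ?_⟩
      have hk0 : (1 - φ) k = 0 := by
        have : (φ - 1) k = 0 := hk
        calc (1 - φ) k = (-(φ - 1)) k := by rw [neg_sub]
          _ = -((φ - 1) k) := LinearMap.neg_apply _ _
          _ = 0 := by rw [this, neg_zero]
      rw [map_add, hk0, add_zero]
  have hcomapD : Submodule.comap Nφ D = K ⊔ W' := by
    ext x
    rw [Submodule.mem_comap, Submodule.mem_sup]
    constructor
    · rintro hx
      rw [hD, Submodule.mem_map] at hx
      obtain ⟨k, hk, heq⟩ := hx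
      refine ⟨k, hk, x - k, ?_, by abel⟩
      show Nφ (x - k) = 0
      rw [map_sub, heq, sub_self]
    · rintro ⟨k, hk, w, hw, rfl⟩
      rw [hD, Submodule.mem_map]
      refine ⟨k, hk, ?_⟩
      have hw0 : Nφ w = 0 := hw
      rw [map_add, hw0, add_zero]
  -- bridging to AddSubgroup.relindex
  have bridge : ∀ P Q : Submodule ℤ M, relIndex P Q = P.toAddSubgroup.relIndex Q.toAddSubgroup :=
    fun _ _ => rfl
  -- the two "outer" relative indices agree
  have hmapTop : ∀ ψ : Module.End ℤ M,
      AddSubgroup.map ψ.toAddMonoidHom ⊤ = (LinearMap.range ψ).toAddSubgroup := by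
    intro ψ
    rw [LinearMap.range_toAddSubgroup, AddMonoidHom.range_eq_map]
  have e1 : A.toAddSubgroup.relIndex B.toAddSubgroup
      = (W' ⊔ K).toAddSubgroup.relIndex ⊤ := by
    have h := AddSubgroup.relIndex_comap A.toAddSubgroup
      ((1 - φ : Module.End ℤ M)).toAddMonoidHom ⊤
    rw [hmapTop, ← hB] at h
    have hc : AddSubgroup.comap ((1 - φ : Module.End ℤ M)).toAddMonoidHom A.toAddSubgroup
        = (W' ⊔ K).toAddSubgroup := by
      rw [← hcomapA]; rfl
    rw [hc] at h
    exact h.symm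
  have e2 : D.toAddSubgroup.relIndex C.toAddSubgroup
      = (W' ⊔ K).toAddSubgroup.relIndex ⊤ := by
    have h := AddSubgroup.relIndex_comap D.toAddSubgroup Nφ.toAddMonoidHom ⊤
    rw [hmapTop, ← hC] at h
    have hc : AddSubgroup.comap Nφ.toAddMonoidHom D.toAddSubgroup
        = (W' ⊔ K).toAddSubgroup := by
      rw [← sup_comm, ← hcomapD]
      rfl
    rw [hc] at h
    exact h.symm
  -- towers
  have tower1 := AddSubgroup.relIndex_mul_relIndex A.toAddSubgroup B.toAddSubgroup
    W'.toAddSubgroup ((Submodule.toAddSubgroup_le _ _).mpr hAB)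
    ((Submodule.toAddSubgroup_le _ _).mpr hBW)
  have tower2 := AddSubgroup.relIndex_mul_relIndex D.toAddSubgroup C.toAddSubgroup
    K.toAddSubgroup ((Submodule.toAddSubgroup_le _ _).mpr hDC)
    ((Submodule.toAddSubgroup_le _ _).mpr hCK)
  -- value of [K : D]
  have hDK_val : relIndex D K = f ^ finrank ℤ K := by
    have hcom : D.comap K.subtype
        = LinearMap.range ((f : ℤ) • (LinearMap.id : K →ₗ[ℤ] K)) := by
      ext y
      rw [Submodule.mem_comap, hDsmul, Submodule.mem_map, LinearMap.mem_range]
      constructor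
      · rintro ⟨x, hx, heq⟩
        refine ⟨⟨x, hx⟩, ?_⟩
        apply Subtype.ext
        simpa using heq
      · rintro ⟨z, rfl⟩
        exact ⟨z.1, z.2, by simp⟩
    rw [relIndex, hcom, card_quot_smul' K f hf]
  -- finiteness parts
  have fin1 : Finite (↥W' ⧸ A.comap W'.subtype) := fin_aux' f hf A W' hfW
  have fin2 : Finite (↥W' ⧸ B.comap W'.subtype) :=
    fin_aux' f hf B W' (fun x hx => hAB (hfW x hx))
  have hfK : ∀ x ∈ K, (f : ℤ) • x ∈ C := by
    intro x hx
    apply hDC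
    rw [hDsmul]
    exact ⟨x, hx, rfl⟩
  have fin3 : Finite (↥K ⧸ C.comap K.subtype) := fin_aux' f hf C K hfK
  refine ⟨⟨hAW, fin1⟩, ⟨hBW, fin2⟩, ⟨hCK, fin3⟩, ?_⟩
  -- final arithmetic
  rw [bridge A W', bridge C K, bridge B W', ← hDK_val, bridge D K, ← tower1, ← tower2, e1, e2]
  ring
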